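/- Suppose c₁ = 1/2 and the function Υ : ℝ → ℝ satisfies (1/2)·sinc(ν/2)·Υ(ν) = b̄₁(ν) and cos(ν/2)·Υ(ν) = b₁(ν) for ν ∈ {0, hω}. Then for every g : ℝ^d → ℝ^d and every integer n ≥ 1, the n-fold composition of the ERKN integrator satisfies Φ_h^n = Φ_{−h/2,L} ∘ Φ_{−h/2,NL} ∘ Φ̂_h^n ∘ Φ_{h/2,NL} ∘ Φ_{h/2,L} = Φ_{h/2,L} ∘ Φ_{h/2,NL} ∘ Φ̂_h^{n−1} ∘ Φ_{h/2,NL} ∘ Φ_{h/2,L}, where Φ̂_h = Φ_{h/2,NL} ∘ Φ_{h,L} ∘ Φ_{h/2,NL}. -/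

import Mathlib

noncomputable section

/-- The (unnormalized) sinc function: `sinc x = sin x / x` for `x ≠ 0`, `sinc 0 = 1`. -/
def rsinc (x : ℝ) : ℝ := if x = 0 then 1 else Real.sin x / x

/-- Real coordinate space `ℝ^d` with the Euclidean norm. -/
abbrev Vec (d : ℕ) : Type := EuclideanSpace ℝ (Fin d)

/-- Block-diagonal scalar operator: multiplies the first `d₁` coordinates by `a`
and the remaining `d₂` coordinates by `b`.  This realizes `f(hΩ)` for
`Ω = diag(0·I_{d₁}, ω·I_{d₂})`, with `a = f 0` and `b = f (hω)`. -/
def bop (d₁ d₂ : ℕ) (a b : ℝ) (v : Vec (d₁ + d₂)) : Vec (d₁ + d₂) :=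
  WithLp.toLp 2 (fun i : Fin (d₁ + d₂) => (if (i : ℕ) < d₁ then a else b) * v i)

/-- One-stage explicit ERKN integrator `Φ_h` for `q'' + Ω²q = g(q)`:
`Q = cos(c₁hΩ)q + c₁h·sinc(c₁hΩ)p`,
`q⁺ = cos(hΩ)q + h·sinc(hΩ)p + h²·b̄₁(hΩ)g(Q)`,
`p⁺ = −hΩ²·sinc(hΩ)q + cos(hΩ)p + h·b₁(hΩ)g(Q)`. -/
def erkn (d₁ d₂ : ℕ) (h ω c₁ : ℝ) (bbar b₁ : ℝ → ℝ)
    (g : Vec (d₁ + d₂) → Vec (d₁ + d₂)) (x : Vec (d₁ + d₂) × Vec (d₁ + d₂)) :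
    Vec (d₁ + d₂) × Vec (d₁ + d₂) :=
  let q := x.1
  let p := x.2
  let Q := bop d₁ d₂ (Real.cos (c₁ * (h * 0))) (Real.cos (c₁ * (h * ω))) q
         + bop d₁ d₂ (c₁ * h * rsinc (c₁ * (h * 0))) (c₁ * h * rsinc (c₁ * (h * ω))) p
  ( bop d₁ d₂ (Real.cos (h * 0)) (Real.cos (h * ω)) q
    + bop d₁ d₂ (h * rsinc (h * 0)) (h * rsinc (h * ω)) p
    + bop d₁ d₂ (h ^ 2 * bbar (h * 0)) (h ^ 2 * bbar (h * ω)) (g Q),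
    bop d₁ d₂ (-(h * 0 ^ 2 * rsinc (h * 0))) (-(h * ω ^ 2 * rsinc (h * ω))) q
    + bop d₁ d₂ (Real.cos (h * 0)) (Real.cos (h * ω)) p
    + bop d₁ d₂ (h * b₁ (h * 0)) (h * b₁ (h * ω)) (g Q) )

/-- Exact time-`t` flow `Φ_{t,L}` of the linear equation `q̇ = p`, `ṗ = −Ω²q`. -/
def phiL (d₁ d₂ : ℕ) (ω t : ℝ) (x : Vec (d₁ + d₂) × Vec (d₁ + d₂)) :
    Vec (d₁ + d₂) × Vec (d₁ + d₂) :=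
  ( bop d₁ d₂ (Real.cos (t * 0)) (Real.cos (t * ω)) x.1
    + bop d₁ d₂ (t * rsinc (t * 0)) (t * rsinc (t * ω)) x.2,
    bop d₁ d₂ (-(t * 0 ^ 2 * rsinc (t * 0))) (-(t * ω ^ 2 * rsinc (t * ω))) x.1
    + bop d₁ d₂ (Real.cos (t * 0)) (Real.cos (t * ω)) x.2 )

/-- Time-`t` flow `Φ_{t,NL}` of the nonlinear equation `q̇ = 0`, `ṗ = Υ(hΩ)g(q)`. -/
def phiNL (d₁ d₂ : ℕ) (h ω : ℝ) (Υ : ℝ → ℝ) (g : Vec (d₁ + d₂) → Vec (d₁ + d₂))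
    (t : ℝ) (x : Vec (d₁ + d₂) × Vec (d₁ + d₂)) :
    Vec (d₁ + d₂) × Vec (d₁ + d₂) :=
  (x.1, x.2 + bop d₁ d₂ (t * Υ (h * 0)) (t * Υ (h * ω)) (g x.1))


lemma rsinc_zero : rsinc 0 = 1 := by simp [rsinc]

lemma mul_rsinc (x : ℝ) : x * rsinc x = Real.sin x := by
  rcases eq_or_ne x 0 with rfl | hx
  · simp [rsinc]
  · rw [rsinc, if_neg hx]; field_simp

lemma smul_rsinc {ω : ℝ} (hω : ω ≠ 0) (t : ℝ) : t * rsinc (t * ω) = Real.sin (t * ω) / ω := by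
  rcases eq_or_ne t 0 with rfl | ht
  · simp
  · rw [rsinc, if_neg (mul_ne_zero ht hω)]
    field_simp

lemma cos_mul_rsinc_half (x : ℝ) : Real.cos (x/2) * rsinc (x/2) = rsinc x := by
  rcases eq_or_ne x 0 with rfl | hx
  · simp [rsinc]
  · have h2 : x/2 ≠ 0 := by simpa using hx
    rw [rsinc, if_neg h2, rsinc, if_neg hx]
    have : Real.sin x = 2 * Real.sin (x/2) * Real.cos (x/2) := by
      rw [show x = 2 * (x/2) by ring, Real.sin_two_mul]; ring_nf
    rw [this]; field_simp

lemma cos_sq_half (x : ℝ) : Real.cos (x/2) ^ 2 - Real.sin (x/2) ^ 2 = Real.cos x := by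
  rw [show Real.cos x = Real.cos (2*(x/2)) by ring_nf, Real.cos_two_mul']

lemma wsq_rsinc (t ω : ℝ) : t * ω ^ 2 * rsinc (t * ω) = ω * Real.sin (t * ω) := by
  linear_combination ω * mul_rsinc (t * ω)


lemma bop_add_coeff (d₁ d₂ : ℕ) (a b a' b' : ℝ) (v : Vec (d₁ + d₂)) :
    bop d₁ d₂ a b v + bop d₁ d₂ a' b' v = bop d₁ d₂ (a + a') (b + b') v := by
  ext i; simp [bop]; split <;> ring

lemma bop_bop (d₁ d₂ : ℕ) (a b a' b' : ℝ) (v : Vec (d₁ + d₂)) :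
    bop d₁ d₂ a b (bop d₁ d₂ a' b' v) = bop d₁ d₂ (a * a') (b * b') v := by
  ext i; simp [bop]; split <;> ring

lemma bop_add_vec (d₁ d₂ : ℕ) (a b : ℝ) (v w : Vec (d₁ + d₂)) :
    bop d₁ d₂ a b (v + w) = bop d₁ d₂ a b v + bop d₁ d₂ a b w := by
  ext i; simp [bop]; split <;> ring

lemma bop_one (d₁ d₂ : ℕ) (v : Vec (d₁ + d₂)) : bop d₁ d₂ 1 1 v = v := by
  ext i; simp [bop]

lemma bop_zero (d₁ d₂ : ℕ) (v : Vec (d₁ + d₂)) : bop d₁ d₂ 0 0 v = 0 := by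
  ext i; simp [bop]

lemma bop_congr (d₁ d₂ : ℕ) {a b a' b' : ℝ} (ha : a = a') (hb : b = b') (v : Vec (d₁ + d₂)) :
    bop d₁ d₂ a b v = bop d₁ d₂ a' b' v := by rw [ha, hb]


lemma phiNL_comp (d₁ d₂ : ℕ) (h ω : ℝ) (Υ : ℝ → ℝ) (g : Vec (d₁ + d₂) → Vec (d₁ + d₂))
    (s t : ℝ) (x : Vec (d₁ + d₂) × Vec (d₁ + d₂)) :
    phiNL d₁ d₂ h ω Υ g s (phiNL d₁ d₂ h ω Υ g t x) = phiNL d₁ d₂ h ω Υ g (s + t) x := by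
  simp only [phiNL, Prod.mk.injEq, true_and]
  rw [add_assoc, bop_add_coeff]
  exact congrArg _ (bop_congr _ _ (by ring) (by ring) _)

lemma phiNL_zero (d₁ d₂ : ℕ) (h ω : ℝ) (Υ : ℝ → ℝ) (g : Vec (d₁ + d₂) → Vec (d₁ + d₂))
    (x : Vec (d₁ + d₂) × Vec (d₁ + d₂)) :
    phiNL d₁ d₂ h ω Υ g 0 x = x := by
  simp only [phiNL, zero_mul, bop_zero, add_zero]

lemma phiL_comp (d₁ d₂ : ℕ) {ω : ℝ} (hω : ω ≠ 0) (s t : ℝ)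
    (x : Vec (d₁ + d₂) × Vec (d₁ + d₂)) :
    phiL d₁ d₂ ω s (phiL d₁ d₂ ω t x) = phiL d₁ d₂ ω (s + t) x := by
  simp only [phiL, mul_zero, rsinc_zero, Real.cos_zero, mul_one, ne_eq, OfNat.ofNat_ne_zero,
    not_false_eq_true, zero_pow, neg_zero, bop_add_vec, bop_bop, Prod.mk.injEq]
  constructor
  · rw [add_add_add_comm, bop_add_coeff, bop_add_coeff]
    congr 1
    · refine bop_congr _ _ (by ring) ?_ _
      rw [add_mul, Real.cos_add, ← mul_rsinc (s * ω), ← mul_rsinc (t * ω)]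
      ring
    · refine bop_congr _ _ (by ring) ?_ _
      rw [smul_rsinc hω, smul_rsinc hω, smul_rsinc hω, add_mul, Real.sin_add]
      field_simp
      ring
  · rw [add_add_add_comm, bop_add_coeff, bop_add_coeff]
    congr 1
    · refine bop_congr _ _ (by ring) ?_ _
      rw [wsq_rsinc, wsq_rsinc, wsq_rsinc, add_mul, Real.sin_add]
      ring
    · refine bop_congr _ _ (by ring) ?_ _
      rw [add_mul, Real.cos_add, ← mul_rsinc (s * ω), ← mul_rsinc (t * ω)]
      ring

lemma phiL_zero (d₁ d₂ : ℕ) (ω : ℝ) (x : Vec (d₁ + d₂) × Vec (d₁ + d₂)) :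
    phiL d₁ d₂ ω 0 x = x := by
  simp only [phiL, mul_zero, rsinc_zero, Real.cos_zero, zero_mul, mul_one, neg_zero,
    bop_one, bop_zero, add_zero, zero_add]

lemma erkn_main (d₁ d₂ : ℕ) (h ω : ℝ) (bbar b₁ Υ : ℝ → ℝ)
    (g : Vec (d₁ + d₂) → Vec (d₁ + d₂))
    (hbb0 : bbar 0 = Υ 0 / 2) (hb10 : b₁ 0 = Υ 0)
    (hbbν : bbar (h*ω) = 1/2 * rsinc (h/2*ω) * Υ (h*ω))
    (hb1ν : b₁ (h*ω) = Real.cos (h/2*ω) * Υ (h*ω))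
    (x : Vec (d₁ + d₂) × Vec (d₁ + d₂)) :
    phiL d₁ d₂ ω (h/2) (erkn d₁ d₂ h ω (1/2) bbar b₁ g x)
    = phiL d₁ d₂ ω h (phiNL d₁ d₂ h ω Υ g h (phiL d₁ d₂ ω (h/2) x)) := by
  have I1 : Real.cos (h/2*ω) * rsinc (h/2*ω) = rsinc (h*ω) := by
    have := cos_mul_rsinc_half (h*ω)
    rw [show h*ω/2 = h/2*ω by ring] at this
    exact this
  have I2 : Real.cos (h/2*ω)^2 - (h/2*ω)^2 * rsinc (h/2*ω)^2 = Real.cos (h*ω) := by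
    have h1 := cos_sq_half (h*ω)
    have h2 := mul_rsinc (h*ω/2)
    rw [show h*ω/2 = h/2*ω by ring] at h1 h2
    rw [← h2] at h1
    linear_combination h1
  simp only [erkn, phiL, phiNL, mul_zero, rsinc_zero, Real.cos_zero, mul_one, zero_pow,
    ne_eq, OfNat.ofNat_ne_zero, not_false_eq_true, neg_zero,
    show (1:ℝ)/2*(h*ω) = h/2*ω by ring, show (1:ℝ)/2*h = h/2 by ring]
  rw [← I1, ← I2]
  refine Prod.ext ?_ ?_ <;>
  · ext i
    simp only [bop, hbb0, hb10, hbbν, hb1ν, PiLp.add_apply, Pi.add_apply, PiLp.toLp_apply]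
    split_ifs <;> ring

/-- `n`-fold conjugacy: for `n ≥ 1`,
`Φ_h^n = Φ_{−h/2,L} ∘ Φ_{−h/2,NL} ∘ Φ̂_h^n ∘ Φ_{h/2,NL} ∘ Φ_{h/2,L}
       = Φ_{h/2,L} ∘ Φ_{h/2,NL} ∘ Φ̂_h^{n−1} ∘ Φ_{h/2,NL} ∘ Φ_{h/2,L}`. -/
theorem erkn_iterate_conjugate (d₁ d₂ : ℕ) (h ω : ℝ) (hh : 0 < h) (hω : 0 < ω)
    (bbar b₁ Υ : ℝ → ℝ)
    (hΥ₁ : ∀ ν ∈ ({0, h * ω} : Set ℝ), (1/2) * rsinc (ν / 2) * Υ ν = bbar ν)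
    (hΥ₂ : ∀ ν ∈ ({0, h * ω} : Set ℝ), Real.cos (ν / 2) * Υ ν = b₁ ν)
    (g : Vec (d₁ + d₂) → Vec (d₁ + d₂)) (n : ℕ) (hn : 1 ≤ n) :
    let Φhat : Vec (d₁ + d₂) × Vec (d₁ + d₂) → Vec (d₁ + d₂) × Vec (d₁ + d₂) :=
      fun y => phiNL d₁ d₂ h ω Υ g (h/2) (phiL d₁ d₂ ω h (phiNL d₁ d₂ h ω Υ g (h/2) y))
    ∀ x : Vec (d₁ + d₂) × Vec (d₁ + d₂),
      (erkn d₁ d₂ h ω (1/2) bbar b₁ g)^[n] x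
        = phiL d₁ d₂ ω (-(h/2)) (phiNL d₁ d₂ h ω Υ g (-(h/2))
            (Φhat^[n] (phiNL d₁ d₂ h ω Υ g (h/2) (phiL d₁ d₂ ω (h/2) x)))) ∧
      (erkn d₁ d₂ h ω (1/2) bbar b₁ g)^[n] x
        = phiL d₁ d₂ ω (h/2) (phiNL d₁ d₂ h ω Υ g (h/2)
            (Φhat^[n - 1] (phiNL d₁ d₂ h ω Υ g (h/2) (phiL d₁ d₂ ω (h/2) x)))) := by
  intro Φhat
  have hω' : ω ≠ 0 := ne_of_gt hω
  have hbb0 : bbar 0 = Υ 0 / 2 := by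
    have := hΥ₁ 0 (by simp)
    rw [show (0:ℝ)/2 = 0 by norm_num, rsinc_zero] at this
    linarith
  have hb10 : b₁ 0 = Υ 0 := by
    have := hΥ₂ 0 (by simp)
    rw [show (0:ℝ)/2 = 0 by norm_num, Real.cos_zero, one_mul] at this
    exact this.symm
  have hbbν : bbar (h*ω) = 1/2 * rsinc (h/2*ω) * Υ (h*ω) := by
    have := hΥ₁ (h*ω) (by simp)
    rw [show h*ω/2 = h/2*ω by ring] at this
    exact this.symm
  have hb1ν : b₁ (h*ω) = Real.cos (h/2*ω) * Υ (h*ω) := by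
    have := hΥ₂ (h*ω) (by simp)
    rw [show h*ω/2 = h/2*ω by ring] at this
    exact this.symm
  set F := erkn d₁ d₂ h ω (1/2) bbar b₁ g with hF
  set B : Vec (d₁ + d₂) × Vec (d₁ + d₂) → Vec (d₁ + d₂) × Vec (d₁ + d₂) :=
    fun y => phiNL d₁ d₂ h ω Υ g (h/2) (phiL d₁ d₂ ω (h/2) y) with hB
  have key : ∀ y, B (F y) = Φhat (B y) := by
    intro y
    show phiNL d₁ d₂ h ω Υ g (h/2) (phiL d₁ d₂ ω (h/2) (F y))
      = phiNL d₁ d₂ h ω Υ g (h/2) (phiL d₁ d₂ ω h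
          (phiNL d₁ d₂ h ω Υ g (h/2) (phiNL d₁ d₂ h ω Υ g (h/2) (phiL d₁ d₂ ω (h/2) y))))
    rw [phiNL_comp, show h/2 + h/2 = h by ring]
    exact congrArg _ (erkn_main d₁ d₂ h ω bbar b₁ Υ g hbb0 hb10 hbbν hb1ν y)
  have iter : ∀ m y, B (F^[m] y) = Φhat^[m] (B y) := by
    intro m
    induction m with
    | zero => intro y; simp
    | succ k ih =>
      intro y
      rw [Function.iterate_succ_apply', Function.iterate_succ_apply', key, ih]
  have inv : ∀ y, phiL d₁ d₂ ω (-(h/2)) (phiNL d₁ d₂ h ω Υ g (-(h/2)) (B y)) = y := by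
    intro y
    show phiL d₁ d₂ ω (-(h/2)) (phiNL d₁ d₂ h ω Υ g (-(h/2))
      (phiNL d₁ d₂ h ω Υ g (h/2) (phiL d₁ d₂ ω (h/2) y))) = y
    rw [phiNL_comp, show -(h/2) + h/2 = 0 by ring, phiNL_zero, phiL_comp d₁ d₂ hω',
      show -(h/2) + h/2 = 0 by ring, phiL_zero]
  intro x
  have first : F^[n] x = phiL d₁ d₂ ω (-(h/2)) (phiNL d₁ d₂ h ω Υ g (-(h/2))
      (Φhat^[n] (phiNL d₁ d₂ h ω Υ g (h/2) (phiL d₁ d₂ ω (h/2) x)))) := by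
    have : Φhat^[n] (phiNL d₁ d₂ h ω Υ g (h/2) (phiL d₁ d₂ ω (h/2) x)) = B (F^[n] x) :=
      (iter n x).symm
    rw [this, inv]
  refine ⟨first, ?_⟩
  obtain ⟨m, rfl⟩ : ∃ m, n = m + 1 := ⟨n - 1, (Nat.succ_pred_eq_of_pos hn).symm⟩
  rw [first, Function.iterate_succ_apply', Nat.add_sub_cancel]
  set y := Φhat^[m] (phiNL d₁ d₂ h ω Υ g (h/2) (phiL d₁ d₂ ω (h/2) x)) with hy
  show phiL d₁ d₂ ω (-(h/2)) (phiNL d₁ d₂ h ω Υ g (-(h/2))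
      (phiNL d₁ d₂ h ω Υ g (h/2) (phiL d₁ d₂ ω h (phiNL d₁ d₂ h ω Υ g (h/2) y))))
    = phiL d₁ d₂ ω (h/2) (phiNL d₁ d₂ h ω Υ g (h/2) y)
  rw [phiNL_comp, show -(h/2) + h/2 = 0 by ring, phiNL_zero, phiL_comp d₁ d₂ hω',
    show -(h/2) + h = h/2 by ring]
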